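/- For every n ≥ 0 there exists an indecomposable representation M of Q with dimension vector (n, n, n+1, n+1) together with a short exact sequence of representations 0 → P₄ⁿ → P₃ ⊕ P₁ⁿ → M → 0. -/

import Mathlib

variable (k : Type) [Field k]

/-- A finite-dimensional representation of the quiver `Q` with vertices `1,2,3,4`
and arrows `a : 1 → 2`, `b : 1 → 3`, `c : 2 → 4`, `d : 3 → 4`. -/
structure QRep where
  V1 : Type
  V2 : Type
  V3 : Type
  V4 : Type
  [acg1 : AddCommGroup V1]
  [acg2 : AddCommGroup V2]
  [acg3 : AddCommGroup V3]
  [acg4 : AddCommGroup V4]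
  [mod1 : Module k V1]
  [mod2 : Module k V2]
  [mod3 : Module k V3]
  [mod4 : Module k V4]
  [fin1 : FiniteDimensional k V1]
  [fin2 : FiniteDimensional k V2]
  [fin3 : FiniteDimensional k V3]
  [fin4 : FiniteDimensional k V4]
  ma : V1 →ₗ[k] V2
  mb : V1 →ₗ[k] V3
  mc : V2 →ₗ[k] V4
  md : V3 →ₗ[k] V4

attribute [instance] QRep.acg1 QRep.acg2 QRep.acg3 QRep.acg4
  QRep.mod1 QRep.mod2 QRep.mod3 QRep.mod4
  QRep.fin1 QRep.fin2 QRep.fin3 QRep.fin4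

variable {k}

/-- Morphisms of representations of `Q`. -/
@[ext]
structure QHom (M N : QRep k) where
  f1 : M.V1 →ₗ[k] N.V1
  f2 : M.V2 →ₗ[k] N.V2
  f3 : M.V3 →ₗ[k] N.V3
  f4 : M.V4 →ₗ[k] N.V4
  comm_a : f2 ∘ₗ M.ma = N.ma ∘ₗ f1
  comm_b : f3 ∘ₗ M.mb = N.mb ∘ₗ f1
  comm_c : f4 ∘ₗ M.mc = N.mc ∘ₗ f2
  comm_d : f4 ∘ₗ M.md = N.md ∘ₗ f3

/-- Two representations are isomorphic iff there is a morphism all of whose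
components are bijective. -/
def QIso (M N : QRep k) : Prop :=
  ∃ f : QHom M N, Function.Bijective f.f1 ∧ Function.Bijective f.f2 ∧
    Function.Bijective f.f3 ∧ Function.Bijective f.f4

/-- The zero representation(s). -/
def QRep.IsZeroRep (M : QRep k) : Prop :=
  Subsingleton M.V1 ∧ Subsingleton M.V2 ∧ Subsingleton M.V3 ∧ Subsingleton M.V4

/-- Vertexwise direct sum of representations. -/
def QRep.dsum (M N : QRep k) : QRep k where
  V1 := M.V1 × N.V1
  V2 := M.V2 × N.V2
  V3 := M.V3 × N.V3
  V4 := M.V4 × N.V4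
  ma := M.ma.prodMap N.ma
  mb := M.mb.prodMap N.mb
  mc := M.mc.prodMap N.mc
  md := M.md.prodMap N.md

/-- Direct sum of `n` copies of a representation. -/
def QRep.dpow (M : QRep k) (n : ℕ) : QRep k where
  V1 := Fin n → M.V1
  V2 := Fin n → M.V2
  V3 := Fin n → M.V3
  V4 := Fin n → M.V4
  ma := M.ma.compLeft (Fin n)
  mb := M.mb.compLeft (Fin n)
  mc := M.mc.compLeft (Fin n)
  md := M.md.compLeft (Fin n)

/-- A representation is indecomposable if it is nonzero and not isomorphic to a
direct sum of two nonzero representations. -/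
def QRep.Indecomposable (M : QRep k) : Prop :=
  ¬ M.IsZeroRep ∧ ∀ A B : QRep k, QIso M (A.dsum B) → A.IsZeroRep ∨ B.IsZeroRep

/-- `0 → A → B → C → 0` is short exact (vertexwise). -/
def QShortExact {A B C : QRep k} (f : QHom A B) (g : QHom B C) : Prop :=
  (Function.Injective f.f1 ∧ Function.Injective f.f2 ∧
    Function.Injective f.f3 ∧ Function.Injective f.f4) ∧
  (Function.Surjective g.f1 ∧ Function.Surjective g.f2 ∧
    Function.Surjective g.f3 ∧ Function.Surjective g.f4) ∧
  (LinearMap.range f.f1 = LinearMap.ker g.f1 ∧ LinearMap.range f.f2 = LinearMap.ker g.f2 ∧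
    LinearMap.range f.f3 = LinearMap.ker g.f3 ∧ LinearMap.range f.f4 = LinearMap.ker g.f4)

variable (k)

/-- The `n×n` Jordan block with eigenvalue `lam`, as a linear endomorphism of `kⁿ`. -/
def jordan (n : ℕ) (lam : k) : (Fin n → k) →ₗ[k] (Fin n → k) :=
  Matrix.mulVecLin (Matrix.of fun i j : Fin n =>
    if i = j then lam else if (i : ℕ) + 1 = (j : ℕ) then 1 else 0)

/-- The representation `M_n(λ) = (kⁿ,kⁿ,kⁿ,kⁿ; id,id,id,J_n(λ))`. -/
def Mlam (n : ℕ) (lam : k) : QRep k where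
  V1 := Fin n → k
  V2 := Fin n → k
  V3 := Fin n → k
  V4 := Fin n → k
  ma := LinearMap.id
  mb := LinearMap.id
  mc := LinearMap.id
  md := jordan k n lam

/-- The indecomposable projective `P₁ = (k,k,k,k²)`. -/
def P1 : QRep k where
  V1 := k
  V2 := k
  V3 := k
  V4 := k × k
  ma := LinearMap.id
  mb := LinearMap.id
  mc := LinearMap.inl k k k
  md := LinearMap.inr k k k

/-- The indecomposable projective `P₂ = (0,k,0,k)`. -/
def P2 : QRep k where
  V1 := Fin 0 → k
  V2 := k
  V3 := Fin 0 → k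
  V4 := k
  ma := 0
  mb := 0
  mc := LinearMap.id
  md := 0

/-- The indecomposable projective `P₃ = (0,0,k,k)`. -/
def P3 : QRep k where
  V1 := Fin 0 → k
  V2 := Fin 0 → k
  V3 := k
  V4 := k
  ma := 0
  mb := 0
  mc := 0
  md := LinearMap.id

/-- The indecomposable projective `P₄ = (0,0,0,k)`. -/
def P4 : QRep k where
  V1 := Fin 0 → k
  V2 := Fin 0 → k
  V3 := Fin 0 → k
  V4 := k
  ma := 0
  mb := 0
  mc := 0
  md := 0


namespace Stmt6Aux

variable (k : Type) [Field k] (n : ℕ)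

/-- `x ↦ (x₀,…,x_{n-1},0)`. -/
def sn : (Fin n → k) →ₗ[k] (Fin (n+1) → k) where
  toFun x j := if h : (j : ℕ) < n then x ⟨j, h⟩ else 0
  map_add' x y := by funext j; by_cases h : (j : ℕ) < n <;> simp [h]
  map_smul' c x := by funext j; by_cases h : (j : ℕ) < n <;> simp [h]

/-- `x ↦ (0,x₀,…,x_{n-1})`. -/
def sh : (Fin n → k) →ₗ[k] (Fin (n+1) → k) where
  toFun x j := if h : 0 < (j : ℕ) then x ⟨(j : ℕ) - 1, by have := j.isLt; omega⟩ else 0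
  map_add' x y := by funext j; by_cases h : 0 < (j : ℕ) <;> simp [h, -Fin.val_pos_iff]
  map_smul' c x := by funext j; by_cases h : 0 < (j : ℕ) <;> simp [h, -Fin.val_pos_iff]

/-- The indecomposable representation with dimension vector `(n,n,n+1,n+1)`. -/
@[reducible]
def MM : QRep k where
  V1 := Fin n → k
  V2 := Fin n → k
  V3 := Fin (n+1) → k
  V4 := Fin (n+1) → k
  ma := LinearMap.id
  mb := sn k n
  mc := sh k n
  md := LinearMap.id

lemma sn_apply (x : Fin n → k) (j : Fin (n+1)) :
    sn k n x j = if h : (j : ℕ) < n then x ⟨j, h⟩ else 0 := rfl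

lemma sh_apply (x : Fin n → k) (j : Fin (n+1)) :
    sh k n x j = if h : 0 < (j : ℕ) then x ⟨(j : ℕ) - 1, by have := j.isLt; omega⟩ else 0 := rfl

variable {k n}

lemma rigid (e : QHom (MM k n) (MM k n)) :
    ∃ lam : k, (∀ x, e.f1 x = lam • x) ∧ (∀ x, e.f2 x = lam • x) ∧
      (∀ x, e.f3 x = lam • x) ∧ (∀ x, e.f4 x = lam • x) := by
  have h21 : e.f2 = e.f1 := by
    have h := e.comm_a
    simp only [MM, LinearMap.comp_id, LinearMap.id_comp] at h
    exact h
  have h43 : e.f4 = e.f3 := by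
    have h := e.comm_d
    simp only [MM, LinearMap.comp_id, LinearMap.id_comp] at h
    exact h
  set A := e.f3 with hA
  set B := e.f1 with hBdef
  have hb : ∀ x, A (sn k n x) = sn k n (B x) := by
    intro x
    exact DFunLike.congr_fun e.comm_b x
  have hc : ∀ x, A (sh k n x) = sh k n (B x) := by
    intro x
    have h0 := DFunLike.congr_fun e.comm_c x
    simp only [LinearMap.comp_apply] at h0
    rw [h21, h43] at h0
    exact h0
  -- entries of A as a function on naturals
  set a : ℕ → ℕ → k := fun i j =>
    if h : i < n+1 ∧ j < n+1 then A (Pi.single ⟨j, h.2⟩ 1) ⟨i, h.1⟩ else 0 with ha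
  have ha_eq : ∀ (i j : Fin (n+1)), a (i : ℕ) (j : ℕ) = A (Pi.single j 1) i :=
    fun i j => dif_pos ⟨i.isLt, j.isLt⟩
  -- single evaluation of sn and sh
  have sn_single : ∀ (j : Fin n), sn k n (Pi.single j 1) =
      Pi.single (⟨(j : ℕ), by omega⟩ : Fin (n+1)) (1 : k) := by
    intro j
    funext l
    rw [sn_apply]
    rcases l with ⟨l, hl⟩
    by_cases h : l < n
    · rw [dif_pos h]
      simp only [Pi.single_apply, Fin.ext_iff]
    · rw [dif_neg h]
      rw [Pi.single_apply]
      rw [if_neg (by simp only [Fin.ext_iff]; omega)]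
  have sh_single : ∀ (j : Fin n), sh k n (Pi.single j 1) =
      Pi.single (⟨(j : ℕ) + 1, by omega⟩ : Fin (n+1)) (1 : k) := by
    intro j
    funext l
    rw [sh_apply]
    rcases l with ⟨l, hl⟩
    by_cases h : 0 < l
    · rw [dif_pos h]
      simp only [Pi.single_apply, Fin.ext_iff]
      have : l - 1 = (j : ℕ) ↔ l = (j : ℕ) + 1 := by omega
      split_ifs with h1 h2 h2 <;> first | rfl | omega
    · rw [dif_neg h]
      rw [Pi.single_apply]
      rw [if_neg (by simp only [Fin.ext_iff]; omega)]
  -- relations from comm_b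
  have relb : ∀ (i j : Fin n),
      A (Pi.single (⟨(j:ℕ), by omega⟩ : Fin (n+1)) 1) = sn k n (B (Pi.single j 1)) := by
    intro i j
    rw [← sn_single j]
    exact hb _
  have relc : ∀ (j : Fin n),
      A (Pi.single (⟨(j:ℕ)+1, by omega⟩ : Fin (n+1)) 1) = sh k n (B (Pi.single j 1)) := by
    intro j
    rw [← sh_single j]
    exact hc _
  -- key relation: a (i+1) (j+1) = a i j for i j < n
  have Rel : ∀ i j : ℕ, i < n → j < n → a (i+1) (j+1) = a i j := by
    intro i j hi hj
    have e1 : a (i+1) (j+1) = B (Pi.single (⟨j, hj⟩ : Fin n) 1) ⟨i, hi⟩ := by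
      rw [show (a (i+1) (j+1)) = A (Pi.single (⟨j+1, by omega⟩ : Fin (n+1)) 1) ⟨i+1, by omega⟩ from
        ha_eq ⟨i+1, by omega⟩ ⟨j+1, by omega⟩]
      rw [relc ⟨j, hj⟩]
      rw [sh_apply]
      rw [dif_pos (by simp)]
      congr 1
    have e2 : a i j = B (Pi.single (⟨j, hj⟩ : Fin n) 1) ⟨i, hi⟩ := by
      rw [show (a i j) = A (Pi.single (⟨j, by omega⟩ : Fin (n+1)) 1) ⟨i, by omega⟩ from
        ha_eq ⟨i, by omega⟩ ⟨j, by omega⟩]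
      rw [relb ⟨i, hi⟩ ⟨j, hj⟩]
      rw [sn_apply]
      rw [dif_pos (by simpa using hi)]
    rw [e1, e2]
  -- boundary relations
  have Top : ∀ j : ℕ, j < n → a 0 (j+1) = 0 := by
    intro j hj
    rw [show (a 0 (j+1)) = A (Pi.single (⟨j+1, by omega⟩ : Fin (n+1)) 1) ⟨0, by omega⟩ from
      ha_eq ⟨0, by omega⟩ ⟨j+1, by omega⟩]
    rw [relc ⟨j, hj⟩]
    rw [sh_apply]
    rw [dif_neg (by simp)]
  have Bot : ∀ j : ℕ, j < n → a n j = 0 := by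
    intro j hj
    rw [show (a n j) = A (Pi.single (⟨j, by omega⟩ : Fin (n+1)) 1) ⟨n, by omega⟩ from
      ha_eq ⟨n, by omega⟩ ⟨j, by omega⟩]
    rw [relb ⟨j, hj⟩ ⟨j, hj⟩]
    rw [sn_apply]
    rw [dif_neg (by simp)]
  -- shifting along diagonals
  have shift : ∀ t i j : ℕ, i + t ≤ n → j + t ≤ n → a (i+t) (j+t) = a i j := by
    intro t
    induction t with
    | zero => intro i j _ _; rfl
    | succ t ih =>
      intro i j hi hj
      have h1 : a (i+t+1) (j+t+1) = a (i+t) (j+t) := Rel (i+t) (j+t) (by omega) (by omega)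
      have h2 : a (i+t) (j+t) = a i j := ih i j (by omega) (by omega)
      calc a (i+(t+1)) (j+(t+1)) = a (i+t+1) (j+t+1) := by ring_nf
        _ = a i j := by rw [h1, h2]
  set lam := a 0 0 with hlam
  -- all entries
  have entry : ∀ i j : ℕ, i ≤ n → j ≤ n → a i j = if i = j then lam else 0 := by
    intro i j hi hj
    rcases lt_trichotomy i j with h | h | h
    · rw [if_neg (by omega)]
      have hs := shift i 0 (j - i) (by omega) (by omega)
      rw [show (0:ℕ) + i = i by omega, show j - i + i = j by omega] at hs
      rw [hs]
      have : j - i = (j - i - 1) + 1 := by omega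
      rw [this]
      exact Top _ (by omega)
    · rw [if_pos h]
      subst h
      have hs := shift i 0 0 (by omega) (by omega)
      rw [show (0:ℕ) + i = i by omega] at hs
      exact hs
    · rw [if_neg (by omega)]
      have hs := shift (n - i) i j (by omega) (by omega)
      rw [show i + (n - i) = n by omega] at hs
      rw [← hs]
      exact Bot _ (by omega)
  -- entries of B
  have entryB : ∀ (i j : Fin n), B (Pi.single j 1) i = if (i:ℕ) = (j:ℕ) then lam else 0 := by
    intro i j
    have e2 : a i j = B (Pi.single j 1) i := by
      rw [show (a i j) = A (Pi.single (⟨(j:ℕ), by omega⟩ : Fin (n+1)) 1) ⟨(i:ℕ), by omega⟩ from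
        ha_eq ⟨(i:ℕ), by omega⟩ ⟨(j:ℕ), by omega⟩]
      rw [relb i j]
      rw [sn_apply]
      rw [dif_pos (by simpa using i.isLt)]
    rw [← e2]
    exact entry i j (by omega) (by omega)
  have entryA : ∀ (i j : Fin (n+1)), A (Pi.single j 1) i = if (i:ℕ) = (j:ℕ) then lam else 0 := by
    intro i j
    rw [← ha_eq]
    exact entry i j (by omega) (by omega)
  -- pointwise conclusion
  have scalar : ∀ (m : ℕ) (C : (Fin m → k) →ₗ[k] (Fin m → k)),
      (∀ (i j : Fin m), C (Pi.single j 1) i = if (i:ℕ) = (j:ℕ) then lam else 0) →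
      ∀ x, C x = lam • x := by
    intro m C hC x
    have hx : x = ∑ j : Fin m, x j • (Pi.single j 1 : Fin m → k) := by
      funext l
      rw [Finset.sum_apply]
      simp only [Pi.smul_apply, Pi.single_apply, smul_eq_mul, mul_ite, mul_one, mul_zero]
      rw [Finset.sum_ite_eq Finset.univ l x]
      simp
    conv_lhs => rw [hx]
    rw [map_sum]
    funext i
    simp only [map_smul, Finset.sum_apply, Pi.smul_apply, smul_eq_mul]
    rw [Finset.sum_congr rfl (fun j _ => by rw [hC i j])]
    simp only [mul_ite, mul_zero, Fin.val_eq_val]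
    rw [Finset.sum_ite_eq Finset.univ i (fun j => x j * lam)]
    simp [mul_comm]
  have hA' : ∀ x, A x = lam • x := scalar (n+1) A entryA
  have hB' : ∀ x, B x = lam • x := scalar n B entryB
  exact ⟨lam, hB', fun x => by rw [h21]; exact hB' x, hA', fun x => by rw [h43]; exact hA' x⟩

lemma side_left {V VA VB : Type} [AddCommGroup V] [Module k V] [AddCommGroup VA] [Module k VA]
    [AddCommGroup VB] [Module k VB] (F : V →ₗ[k] VA × VB) (hF : Function.Bijective F)
    (h0 : ∀ x : V, (LinearEquiv.ofBijective F hF).symm (((F x).1, 0)) = 0) :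
    ∀ a : VA, a = 0 := by
  intro a
  obtain ⟨x, hx⟩ := hF.2 (a, 0)
  have h1 : (((F x).1 : VA), (0:VB)) = F x := by rw [hx]
  have h2 := h0 x
  rw [h1] at h2
  have h3 : (LinearEquiv.ofBijective F hF).symm (F x) = x :=
    (LinearEquiv.ofBijective F hF).symm_apply_apply x
  rw [h3] at h2
  rw [h2, map_zero] at hx
  simpa using congrArg Prod.fst hx.symm

lemma side_right {V VA VB : Type} [AddCommGroup V] [Module k V] [AddCommGroup VA] [Module k VA]
    [AddCommGroup VB] [Module k VB] (F : V →ₗ[k] VA × VB) (hF : Function.Bijective F)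
    (h1 : ∀ x : V, (LinearEquiv.ofBijective F hF).symm (((F x).1, 0)) = x) :
    ∀ b : VB, b = 0 := by
  intro b
  obtain ⟨x, hx⟩ := hF.2 (0, b)
  have h2 : F x = (((F x).1 : VA), (0:VB)) := by
    have h4 := (LinearEquiv.ofBijective F hF).apply_symm_apply (((F x).1 : VA), (0:VB))
    rw [h1 x] at h4
    have h5 : (LinearEquiv.ofBijective F hF) x = F x := rfl
    rw [h5] at h4
    exact h4
  rw [hx] at h2
  simpa using congrArg Prod.snd h2

lemma MM_indec : (MM k n).Indecomposable := by
  constructor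
  · rintro ⟨-, -, h3, -⟩
    have h := @Subsingleton.elim _ h3 (fun _ => (0:k)) (fun _ => (1:k))
    exact zero_ne_one (congrFun h 0)
  · rintro A B ⟨f, hb1, hb2, hb3, hb4⟩
    let E1 := LinearEquiv.ofBijective f.f1 hb1
    let E2 := LinearEquiv.ofBijective f.f2 hb2
    let E3 := LinearEquiv.ofBijective f.f3 hb3
    let E4 := LinearEquiv.ofBijective f.f4 hb4
    let pr1 : (A.dsum B).V1 →ₗ[k] (A.dsum B).V1 := LinearMap.prodMap LinearMap.id 0
    let pr2 : (A.dsum B).V2 →ₗ[k] (A.dsum B).V2 := LinearMap.prodMap LinearMap.id 0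
    let pr3 : (A.dsum B).V3 →ₗ[k] (A.dsum B).V3 := LinearMap.prodMap LinearMap.id 0
    let pr4 : (A.dsum B).V4 →ₗ[k] (A.dsum B).V4 := LinearMap.prodMap LinearMap.id 0
    have hs1 : ∀ y, f.f1 (E1.symm y) = y := fun y => E1.apply_symm_apply y
    have hs2 : ∀ y, f.f2 (E2.symm y) = y := fun y => E2.apply_symm_apply y
    have hs3 : ∀ y, f.f3 (E3.symm y) = y := fun y => E3.apply_symm_apply y
    have hs4 : ∀ y, f.f4 (E4.symm y) = y := fun y => E4.apply_symm_apply y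
    have ca : ∀ x : Fin n → k, f.f2 x = (A.dsum B).ma (f.f1 x) :=
      fun x => DFunLike.congr_fun f.comm_a x
    have cb : ∀ x : Fin n → k, f.f3 (sn k n x) = (A.dsum B).mb (f.f1 x) :=
      fun x => DFunLike.congr_fun f.comm_b x
    have cc : ∀ x : Fin n → k, f.f4 (sh k n x) = (A.dsum B).mc (f.f2 x) :=
      fun x => DFunLike.congr_fun f.comm_c x
    have cd : ∀ x : Fin (n+1) → k, f.f4 x = (A.dsum B).md (f.f3 x) :=
      fun x => DFunLike.congr_fun f.comm_d x
    have prcomm_a : ∀ z, (A.dsum B).ma (pr1 z) = pr2 ((A.dsum B).ma z) := by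
      rintro ⟨u, v⟩; show ((A.ma u, B.ma 0) : A.V2 × B.V2) = (A.ma u, 0); rw [map_zero]
    have prcomm_b : ∀ z, (A.dsum B).mb (pr1 z) = pr3 ((A.dsum B).mb z) := by
      rintro ⟨u, v⟩; show ((A.mb u, B.mb 0) : A.V3 × B.V3) = (A.mb u, 0); rw [map_zero]
    have prcomm_c : ∀ z, (A.dsum B).mc (pr2 z) = pr4 ((A.dsum B).mc z) := by
      rintro ⟨u, v⟩; show ((A.mc u, B.mc 0) : A.V4 × B.V4) = (A.mc u, 0); rw [map_zero]
    have prcomm_d : ∀ z, (A.dsum B).md (pr3 z) = pr4 ((A.dsum B).md z) := by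
      rintro ⟨u, v⟩; show ((A.md u, B.md 0) : A.V4 × B.V4) = (A.md u, 0); rw [map_zero]
    let e : QHom (MM k n) (MM k n) := {
      f1 := E1.symm.toLinearMap ∘ₗ pr1 ∘ₗ f.f1
      f2 := E2.symm.toLinearMap ∘ₗ pr2 ∘ₗ f.f2
      f3 := E3.symm.toLinearMap ∘ₗ pr3 ∘ₗ f.f3
      f4 := E4.symm.toLinearMap ∘ₗ pr4 ∘ₗ f.f4
      comm_a := by
        apply LinearMap.ext; intro x
        apply hb2.1
        show f.f2 (E2.symm (pr2 (f.f2 x))) = f.f2 (E1.symm (pr1 (f.f1 x)))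
        rw [hs2, ca x, ca (E1.symm (pr1 (f.f1 x))), hs1, prcomm_a]
      comm_b := by
        apply LinearMap.ext; intro x
        apply hb3.1
        show f.f3 (E3.symm (pr3 (f.f3 (sn k n x)))) = f.f3 (sn k n (E1.symm (pr1 (f.f1 x))))
        rw [hs3, cb x, cb (E1.symm (pr1 (f.f1 x))), hs1, prcomm_b]
      comm_c := by
        apply LinearMap.ext; intro x
        apply hb4.1
        show f.f4 (E4.symm (pr4 (f.f4 (sh k n x)))) = f.f4 (sh k n (E2.symm (pr2 (f.f2 x))))
        rw [hs4, cc x, cc (E2.symm (pr2 (f.f2 x))), hs2, prcomm_c]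
      comm_d := by
        apply LinearMap.ext; intro x
        apply hb4.1
        show f.f4 (E4.symm (pr4 (f.f4 x))) = f.f4 (E3.symm (pr3 (f.f3 x)))
        rw [hs4, cd x, cd (E3.symm (pr3 (f.f3 x))), hs3, prcomm_d] }
    obtain ⟨lam, he1, he2, he3, he4⟩ := rigid e
    have he3' : ∀ x, E3.symm (pr3 (f.f3 x)) = lam • x := fun x => he3 x
    have idem : lam * lam = lam := by
      have h2 : e.f3 (e.f3 (fun _ => 1)) = e.f3 ((fun _ => 1) : Fin (n+1) → k) := by
        show E3.symm (pr3 (f.f3 (E3.symm (pr3 (f.f3 _))))) = E3.symm (pr3 (f.f3 _))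
        rw [hs3]
        have : pr3 (pr3 (f.f3 (fun _ => 1))) = pr3 (f.f3 (fun _ => 1)) := by
          show ((_, (0: B.V3 →ₗ[k] B.V3) 0) : A.V3 × B.V3) = _
          simp [pr3]; rfl
        rw [this]
      rw [he3 ((fun _ => 1) : Fin (n+1) → k)] at h2
      rw [map_smul] at h2
      rw [he3 ((fun _ => 1) : Fin (n+1) → k)] at h2
      have h3 : lam * (lam * 1) = lam * 1 := congrFun h2 0
      simpa using h3
    have hlam : lam = 0 ∨ lam = 1 := by
      have h0 : lam * (lam - 1) = 0 := by rw [mul_sub, mul_one, idem, sub_self]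
      rcases mul_eq_zero.mp h0 with h | h
      · exact Or.inl h
      · exact Or.inr (sub_eq_zero.mp h)
    rcases hlam with h | h
    · left
      subst h
      refine ⟨?_, ?_, ?_, ?_⟩
      · exact subsingleton_of_forall_eq 0
          (side_left f.f1 hb1 (fun x => by have h := he1 x; rw [zero_smul] at h; exact h))
      · exact subsingleton_of_forall_eq 0
          (side_left f.f2 hb2 (fun x => by have h := he2 x; rw [zero_smul] at h; exact h))
      · exact subsingleton_of_forall_eq 0
          (side_left f.f3 hb3 (fun x => by have h := he3 x; rw [zero_smul] at h; exact h))
      · exact subsingleton_of_forall_eq 0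
          (side_left f.f4 hb4 (fun x => by have h := he4 x; rw [zero_smul] at h; exact h))
    · right
      subst h
      refine ⟨?_, ?_, ?_, ?_⟩
      · exact subsingleton_of_forall_eq 0
          (side_right f.f1 hb1 (fun x => by have h := he1 x; rw [one_smul] at h; exact h))
      · exact subsingleton_of_forall_eq 0
          (side_right f.f2 hb2 (fun x => by have h := he2 x; rw [one_smul] at h; exact h))
      · exact subsingleton_of_forall_eq 0
          (side_right f.f3 hb3 (fun x => by have h := he3 x; rw [one_smul] at h; exact h))
      · exact subsingleton_of_forall_eq 0
          (side_right f.f4 hb4 (fun x => by have h := he4 x; rw [one_smul] at h; exact h))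

variable (k n)

/-- vertex-3 component of the quotient map: `(t,x) ↦ (x₀,…,x_{n-1},t)`. -/
def g3m : (k × (Fin n → k)) →ₗ[k] (Fin (n+1) → k) where
  toFun p j := if h : (j : ℕ) < n then p.2 ⟨j, h⟩ else p.1
  map_add' p q := by funext j; by_cases h : (j : ℕ) < n <;> simp [h]
  map_smul' c p := by funext j; by_cases h : (j : ℕ) < n <;> simp [h]

/-- vertex-4 component of the quotient map. -/
def g4m : (k × (Fin n → k × k)) →ₗ[k] (Fin (n+1) → k) where
  toFun p j := (if h : (j : ℕ) < n then (p.2 ⟨j, h⟩).2 else p.1) +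
    (if h : 0 < (j : ℕ) then (p.2 ⟨(j : ℕ) - 1, by have := j.isLt; omega⟩).1 else 0)
  map_add' p q := by
    funext j
    by_cases h : (j : ℕ) < n <;> by_cases h' : 0 < (j : ℕ) <;> simp [h, h', -Fin.val_pos_iff] <;> ring
  map_smul' c p := by
    funext j
    by_cases h : (j : ℕ) < n <;> by_cases h' : 0 < (j : ℕ) <;> simp [h, h', -Fin.val_pos_iff] <;> ring

/-- vertex-4 component of the inclusion `P₄ⁿ → P₃ ⊕ P₁ⁿ`. -/
def f4m : (Fin n → k) →ₗ[k] (k × (Fin n → k × k)) where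
  toFun q := (-(if h : 0 < n then q ⟨n-1, by omega⟩ else 0),
    fun i => (q i, -(if h : 0 < (i : ℕ) then q ⟨(i : ℕ) - 1, by have := i.isLt; omega⟩ else 0)))
  map_add' q r := by
    refine Prod.ext ?_ ?_
    · by_cases h : 0 < n <;> simp [h] <;> ring
    · funext i
      refine Prod.ext ?_ ?_
      · simp
      · by_cases h : 0 < (i : ℕ) <;> simp [h] <;> ring
  map_smul' c q := by
    refine Prod.ext ?_ ?_
    · by_cases h : 0 < n <;> simp [h]
    · funext i
      refine Prod.ext ?_ ?_
      · simp
      · by_cases h : 0 < (i : ℕ) <;> simp [h]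

/-- The inclusion `P₄ⁿ → P₃ ⊕ P₁ⁿ`. -/
def fhom : QHom ((P4 k).dpow n) ((P3 k).dsum ((P1 k).dpow n)) where
  f1 := 0
  f2 := 0
  f3 := 0
  f4 := f4m k n
  comm_a := by
    apply LinearMap.ext; intro x
    have hx : x = 0 := funext fun i => funext fun z => z.elim0
    subst hx; simp
  comm_b := by
    apply LinearMap.ext; intro x
    have hx : x = 0 := funext fun i => funext fun z => z.elim0
    subst hx; simp
  comm_c := by
    apply LinearMap.ext; intro x
    have hx : x = 0 := funext fun i => funext fun z => z.elim0
    subst hx; simp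
  comm_d := by
    apply LinearMap.ext; intro x
    have hx : x = 0 := funext fun i => funext fun z => z.elim0
    subst hx; simp

/-- The quotient map `P₃ ⊕ P₁ⁿ → M`. -/
def ghom : QHom ((P3 k).dsum ((P1 k).dpow n)) (MM k n) where
  f1 := LinearMap.snd k (Fin 0 → k) (Fin n → k)
  f2 := LinearMap.snd k (Fin 0 → k) (Fin n → k)
  f3 := g3m k n
  f4 := g4m k n
  comm_a := rfl
  comm_b := by
    apply LinearMap.ext; rintro ⟨u, x⟩
    change Fin n → k at x
    funext j
    show g3m k n ((0:k), x) j = sn k n x j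
    dsimp only [QRep.dsum, QRep.dpow, P3, P1, MM, LinearMap.comp_apply,
      LinearMap.prodMap_apply, LinearMap.snd_apply, LinearMap.compLeft,
      g3m, sn, LinearMap.coe_mk, AddHom.coe_mk]
  comm_c := by
    apply LinearMap.ext; rintro ⟨u, x⟩
    change Fin n → k at x
    funext j
    show g4m k n ((0:k), fun i => (x i, (0:k))) j = sh k n x j
    dsimp only [QRep.dsum, QRep.dpow, P3, P1, MM, LinearMap.comp_apply,
      LinearMap.prodMap_apply, LinearMap.snd_apply, LinearMap.compLeft,
      g4m, sh, LinearMap.coe_mk, AddHom.coe_mk]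
    by_cases h : (j : ℕ) < n <;> by_cases h' : 0 < (j : ℕ) <;> simp [h, h', -Fin.val_pos_iff]
  comm_d := by
    apply LinearMap.ext; rintro ⟨t, x⟩
    change k at t
    change Fin n → k at x
    funext j
    show g4m k n (t, fun i => ((0:k), x i)) j = g3m k n (t, x) j
    dsimp only [QRep.dsum, QRep.dpow, P3, P1, MM, LinearMap.comp_apply,
      LinearMap.prodMap_apply, LinearMap.snd_apply, LinearMap.compLeft,
      g4m, g3m, LinearMap.coe_mk, AddHom.coe_mk, LinearMap.id_coe, id_eq]
    by_cases h : (j : ℕ) < n <;> by_cases h' : 0 < (j : ℕ) <;> simp [h, h', -Fin.val_pos_iff]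

lemma ses : QShortExact (fhom k n) (ghom k n) := by
  refine ⟨⟨?_, ?_, ?_, ?_⟩, ⟨?_, ?_, ?_, ?_⟩, ?_, ?_, ?_, ?_⟩
  -- injectivity of f
  · intro a b _
    have ha : a = 0 := funext fun i => funext fun z => z.elim0
    have hb : b = 0 := funext fun i => funext fun z => z.elim0
    rw [ha, hb]
  · intro a b _
    have ha : a = 0 := funext fun i => funext fun z => z.elim0
    have hb : b = 0 := funext fun i => funext fun z => z.elim0
    rw [ha, hb]
  · intro a b _
    have ha : a = 0 := funext fun i => funext fun z => z.elim0
    have hb : b = 0 := funext fun i => funext fun z => z.elim0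
    rw [ha, hb]
  · intro q r h
    funext i
    have h2 := congrArg (fun z => (z.2 i).1) h
    exact h2
  -- surjectivity of g
  · intro y
    exact ⟨⟨fun z => z.elim0, y⟩, rfl⟩
  · intro y
    exact ⟨⟨fun z => z.elim0, y⟩, rfl⟩
  · intro y
    refine ⟨⟨y (Fin.last n), fun i => y ⟨(i : ℕ), by omega⟩⟩, ?_⟩
    funext j
    show (if h : (j : ℕ) < n then y ⟨(j : ℕ), by omega⟩ else y (Fin.last n)) = y j
    by_cases h : (j : ℕ) < n
    · rw [dif_pos h]
    · rw [dif_neg h]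
      exact congrArg y (Fin.ext (by have := j.isLt; simp [Fin.val_last]; omega))
  · intro y
    refine ⟨⟨y (Fin.last n), fun i => ((0:k), y ⟨(i : ℕ), by omega⟩)⟩, ?_⟩
    funext j
    show (if h : (j : ℕ) < n then y ⟨(j : ℕ), by omega⟩ else y (Fin.last n))
        + (if h : 0 < (j : ℕ) then (0:k) else 0) = y j
    have h0 : (if h : 0 < (j : ℕ) then (0:k) else 0) = 0 := by split <;> rfl
    rw [h0, add_zero]
    by_cases h : (j : ℕ) < n
    · rw [dif_pos h]
    · rw [dif_neg h]
      exact congrArg y (Fin.ext (by have := j.isLt; simp [Fin.val_last]; omega))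
  -- exactness
  · apply le_antisymm
    · rintro z ⟨w, rfl⟩
      apply LinearMap.mem_ker.mpr
      rfl
    · rintro ⟨u, x⟩ hz
      have hx : x = 0 := hz
      refine ⟨0, ?_⟩
      refine Prod.ext ?_ ?_
      · exact funext fun z => z.elim0
      · exact hx.symm
  · apply le_antisymm
    · rintro z ⟨w, rfl⟩
      apply LinearMap.mem_ker.mpr
      rfl
    · rintro ⟨u, x⟩ hz
      have hx : x = 0 := hz
      refine ⟨0, ?_⟩
      refine Prod.ext ?_ ?_
      · exact funext fun z => z.elim0
      · exact hx.symm
  · apply le_antisymm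
    · rintro z ⟨w, rfl⟩
      apply LinearMap.mem_ker.mpr
      have hw : (fhom k n).f3 w = 0 := rfl
      rw [hw, map_zero]
    · rintro ⟨t, x⟩ hz
      change k at t
      change Fin n → k at x
      have hval : ∀ j : Fin (n+1),
          (if h : (j : ℕ) < n then x ⟨j, h⟩ else t) = 0 := fun j => congrFun hz j
      have ht : t = 0 := by
        have h1 := hval ⟨n, by omega⟩
        dsimp only at h1
        rwa [dif_neg (lt_irrefl n)] at h1
      have hx : x = 0 := by
        funext i
        have h1 := hval ⟨(i : ℕ), by omega⟩
        dsimp only at h1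
        rwa [dif_pos (i.isLt)] at h1
      refine ⟨0, ?_⟩
      have h0 : (fhom k n).f3 0 = 0 := rfl
      rw [h0]
      exact (Prod.ext ht hx).symm
  · apply le_antisymm
    · rintro z ⟨q, rfl⟩
      change Fin n → k at q
      apply LinearMap.mem_ker.mpr
      funext j
      show g4m k n (f4m k n q) j = 0
      simp only [g4m, f4m, LinearMap.coe_mk, AddHom.coe_mk]
      split_ifs with h1 h2 h3 <;> simp_all [-Fin.val_pos_iff] <;>
        first
          | omega
          | (have hj : (j : ℕ) = n := by have := j.isLt; omega
             have he : (⟨n - 1, by omega⟩ : Fin n)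
                 = ⟨(j:ℕ) - 1, by have := j.isLt; omega⟩ :=
               Fin.ext (by simp [hj])
             rw [he, neg_add_cancel])
    · rintro ⟨t, p⟩ hz
      change k at t
      change Fin n → k × k at p
      have hval : ∀ j : Fin (n+1),
          (if h : (j : ℕ) < n then (p ⟨j, h⟩).2 else t)
          + (if h : 0 < (j : ℕ) then (p ⟨(j : ℕ) - 1, by have := j.isLt; omega⟩).1 else 0)
          = 0 := fun j => congrFun hz j
      refine ⟨fun i => (p i).1, ?_⟩
      refine Prod.ext ?_ ?_
      · show -(if h : 0 < n then (p ⟨n-1, by omega⟩).1 else 0) = t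
        have h1 := hval ⟨n, by omega⟩
        dsimp only at h1
        rw [dif_neg (lt_irrefl n)] at h1
        by_cases hn : 0 < n
        · rw [dif_pos hn] at h1
          rw [dif_pos hn]
          exact (eq_neg_of_add_eq_zero_left h1).symm
        · rw [dif_neg hn] at h1
          rw [dif_neg hn, neg_zero]
          rw [add_zero] at h1
          exact h1.symm
      · funext i
        refine Prod.ext ?_ ?_
        · rfl
        · show -(if h : 0 < (i : ℕ) then (p ⟨(i : ℕ) - 1, by have := i.isLt; omega⟩).1 else 0)
              = (p i).2
          have h2 := hval ⟨(i : ℕ), by omega⟩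
          dsimp only at h2
          rw [dif_pos (i.isLt)] at h2
          by_cases hi : 0 < (i : ℕ)
          · rw [dif_pos hi] at h2
            rw [dif_pos hi]
            exact (eq_neg_of_add_eq_zero_left h2).symm
          · rw [dif_neg hi] at h2
            rw [dif_neg hi, neg_zero]
            rw [add_zero] at h2
            exact h2.symm

end Stmt6Aux




/-- there is an indecomposable representation `M` of `Q` with the
given dimension vector together with a short exact sequence as indicated. -/
theorem stmt6 (k : Type) [Field k] (n : ℕ) :
    ∃ M : QRep k, M.Indecomposable ∧
      Module.finrank k M.V1 = n ∧ Module.finrank k M.V2 = n ∧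
      Module.finrank k M.V3 = n+1 ∧ Module.finrank k M.V4 = n+1 ∧
      ∃ (f : QHom ((P4 k).dpow n) ((P3 k).dsum ((P1 k).dpow n))) (g : QHom ((P3 k).dsum ((P1 k).dpow n)) M), QShortExact f g := by
  refine ⟨Stmt6Aux.MM k n, Stmt6Aux.MM_indec, ?_, ?_, ?_, ?_,
    Stmt6Aux.fhom k n, Stmt6Aux.ghom k n, Stmt6Aux.ses k n⟩
  · exact Module.finrank_fin_fun k
  · exact Module.finrank_fin_fun k
  · exact Module.finrank_fin_fun k
  · exact Module.finrank_fin_fun k
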